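/- Let L be an effect algebra, G a complete Hausdorff topological abelian group, and μ : L → G an additive measure. Then μ is strongly additive (for every orthogonal sequence (a_n) in L, the series Σ μ(a_n) converges in G) if and only if μ is exhaustive (for every orthogonal sequence (a_n) in L, μ(a_n) → 0). -/

import Mathlib

open Filter Topology
open scoped ENNReal NNReal

/-- An effect algebra: a partial commutative monoid with orthosupplementation
and the zero-one law. `D a b` means `a ⊕ b` is defined; `add` is the (junk-valued
outside `D`) total extension of `⊕`. -/
structure EffectAlgebra (L : Type*) where
  D : L → L → Prop
  add : L → L → L
  zero : L
  one : L
  comm_def : ∀ {a b}, D a b → D b a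
  comm : ∀ {a b}, D a b → add a b = add b a
  assoc_def₁ : ∀ {a b c}, D b c → D a (add b c) → D a b
  assoc_def₂ : ∀ {a b c}, D b c → D a (add b c) → D (add a b) c
  assoc : ∀ {a b c}, D b c → D a (add b c) → add (add a b) c = add a (add b c)
  orth : ∀ a, ∃! a', D a a' ∧ add a a' = one
  zero_one : ∀ {a}, D one a → a = zero

namespace EffectAlgebra

variable {L : Type*}

/-- The canonical order: `a ≤ b` iff `a ⊕ r = b` for some `r`. -/
def le (E : EffectAlgebra L) (a b : L) : Prop := ∃ r, E.D a r ∧ E.add a r = b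

/-- The orthosupplement `1 ⊖ a`. -/
noncomputable def compl (E : EffectAlgebra L) (a : L) : L := (E.orth a).choose

/-- Partial sums `a 0 ⊕ ⋯ ⊕ a n`. -/
def psum (E : EffectAlgebra L) (a : ℕ → L) : ℕ → L
  | 0 => a 0
  | n + 1 => E.add (E.psum a n) (a (n + 1))

/-- A sequence is orthogonal when all its finite orthosums are defined. -/
def Orthogonal (E : EffectAlgebra L) (a : ℕ → L) : Prop :=
  ∀ n, E.D (E.psum a n) (a (n + 1))

/-- `s` is the supremum of the set `S` in the canonical order. -/
def IsSup (E : EffectAlgebra L) (S : Set L) (s : L) : Prop :=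
  (∀ x ∈ S, E.le x s) ∧ ∀ u, (∀ x ∈ S, E.le x u) → E.le s u

/-- `s = ⊕ₙ a n`: the sequence is orthogonal and `s` is the sup of the finite orthosums. -/
def IsOrthoSum (E : EffectAlgebra L) (a : ℕ → L) (s : L) : Prop :=
  E.Orthogonal a ∧ E.IsSup (Set.range (E.psum a)) s

/-- Additive (finitely additive) measure. -/
def IsMeasure {G : Type*} [AddCommMonoid G] (E : EffectAlgebra L) (μ : L → G) : Prop :=
  ∀ a b, E.D a b → μ (E.add a b) = μ a + μ b

/-- σ-additivity: `μ (⊕ₙ a n) = Σₙ μ (a n)` whenever the orthosum exists. -/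
def SigmaAdditive {G : Type*} [AddCommMonoid G] [TopologicalSpace G]
    (E : EffectAlgebra L) (μ : L → G) : Prop :=
  ∀ a s, E.IsOrthoSum a s →
    Tendsto (fun n => ∑ k ∈ Finset.range n, μ (a k)) atTop (𝓝 (μ s))

/-- Exhaustivity: `μ (a n) → 0` along every orthogonal sequence. -/
def Exhaustive {G : Type*} [AddCommMonoid G] [TopologicalSpace G]
    (E : EffectAlgebra L) (μ : L → G) : Prop :=
  ∀ a, E.Orthogonal a → Tendsto (fun n => μ (a n)) atTop (𝓝 0)

/-- A generator: every element is the sup of an increasing sequence from `B`. -/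
def IsGenerator (E : EffectAlgebra L) (B : Set L) : Prop :=
  ∀ a : L, ∃ b : ℕ → L, (∀ n, b n ∈ B) ∧ (∀ n, E.le (b n) (b (n + 1)))
    ∧ E.IsSup (Set.range b) a

/-- Riesz decomposition property. -/
def RDP (E : EffectAlgebra L) : Prop :=
  ∀ a b c, E.D a b → E.le c (E.add a b) →
    ∃ c₁ c₂, E.D c₁ c₂ ∧ E.add c₁ c₂ = c ∧ E.le c₁ a ∧ E.le c₂ b

/-- Strong Riesz decomposition property. -/
def sRDP (E : EffectAlgebra L) : Prop :=
  ∀ (a : ℕ → L) (s c : L), E.IsOrthoSum a s → E.le c s →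
    ∃ c' : ℕ → L, E.IsOrthoSum c' c ∧ ∀ n, E.le (c' n) (a n)

/-- A natural basis: an orthogonal sequence of minimal nonzero elements with orthosum `1`. -/
def IsNaturalBasis (E : EffectAlgebra L) (b : ℕ → L) : Prop :=
  E.IsOrthoSum b E.one ∧
  ∀ n, b n ≠ E.zero ∧ ∀ c, c ≠ E.zero → E.le c (b n) → c = b n

/-- The set of finite orthosums of elements of the sequence `b`. -/
def finOrthosums (E : EffectAlgebra L) (b : ℕ → L) : Set L :=
  { x | ∃ c : ℕ → L, (∀ n, c n = b n ∨ c n = E.zero) ∧ E.Orthogonal c ∧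
        ∃ N, x = E.psum c N }

/-- A sequence of measures is pointwise convergent. -/
def PtwiseConv (μ : ℕ → L → ℝ) : Prop :=
  ∀ a : L, ∃ x : ℝ, Tendsto (fun i => μ i a) atTop (𝓝 x)

/-- Uniform exhaustivity of a sequence of measures. -/
def UnifExhaustive (E : EffectAlgebra L) (μ : ℕ → L → ℝ) : Prop :=
  ∀ a, E.Orthogonal a →
    TendstoUniformly (fun n (i : ℕ) => μ i (a n)) (fun _ => (0 : ℝ)) atTop

/-- Uniform strong additivity of a sequence of measures. -/
def UnifStronglyAdditive (E : EffectAlgebra L) (μ : ℕ → L → ℝ) : Prop :=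
  ∀ a, E.Orthogonal a → ∃ f : ℕ → ℝ,
    TendstoUniformly (fun n (i : ℕ) => ∑ k ∈ Finset.range n, μ i (a k)) f atTop

/-- The Nikodym property. -/
def Nikodym (E : EffectAlgebra L) : Prop :=
  ∀ μ : ℕ → L → ℝ, (∀ i, E.IsMeasure (μ i)) → (∀ i, ∃ M, ∀ a, |μ i a| ≤ M) →
    (∀ a : L, ∃ M, ∀ i, |μ i a| ≤ M) → ∃ M, ∀ i, ∀ a : L, |μ i a| ≤ M

/-- The Grothendieck property. -/
def Grothendieck (E : EffectAlgebra L) : Prop :=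
  ∀ μ : ℕ → L → ℝ, (∀ i, E.IsMeasure (μ i)) → (∀ i, ∃ M, ∀ a, |μ i a| ≤ M) →
    PtwiseConv μ → (∃ M, ∀ i, ∀ a : L, |μ i a| ≤ M) → E.UnifStronglyAdditive μ

/-- The Vitali-Hahn-Saks property. -/
def VHS (E : EffectAlgebra L) : Prop :=
  ∀ μ : ℕ → L → ℝ, (∀ i, E.IsMeasure (μ i)) → (∀ i, ∃ M, ∀ a, |μ i a| ≤ M) →
    PtwiseConv μ → E.UnifExhaustive μ

/-- The σ-Nikodym property. -/
def SigmaNikodym (E : EffectAlgebra L) : Prop :=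
  ∀ μ : ℕ → L → ℝ, (∀ i, E.IsMeasure (μ i)) → (∀ i, E.SigmaAdditive (μ i)) →
    (∀ i, ∃ M, ∀ a, |μ i a| ≤ M) →
    (∀ a : L, ∃ M, ∀ i, |μ i a| ≤ M) → ∃ M, ∀ i, ∀ a : L, |μ i a| ≤ M

/-- The σ-Vitali-Hahn-Saks property. -/
def SigmaVHS (E : EffectAlgebra L) : Prop :=
  ∀ μ : ℕ → L → ℝ, (∀ i, E.IsMeasure (μ i)) → (∀ i, E.SigmaAdditive (μ i)) →
    (∀ i, ∃ M, ∀ a, |μ i a| ≤ M) → PtwiseConv μ → E.UnifExhaustive μ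

/-- A bounding subset. -/
def Bounding (E : EffectAlgebra L) (B : Set L) : Prop :=
  ∀ (G : Type) [NormedAddCommGroup G], ∀ μ : ℕ → L → G,
    (∀ i, E.IsMeasure (μ i)) → (∀ i, E.SigmaAdditive (μ i)) →
    (∀ a : L, ∃ M, ∀ i, ‖μ i a‖ ≤ M) →
    ((∃ M, ∀ i, ∀ b ∈ B, ‖μ i b‖ ≤ M) ↔ (∃ M, ∀ i, ∀ a : L, ‖μ i a‖ ≤ M))

/-- A natural subset: a generator closed under orthosums of orthogonal pairs all of whose
orthogonal-complement slices are bounding. -/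
def NaturalSubset (E : EffectAlgebra L) (B : Set L) : Prop :=
  E.IsGenerator B ∧ (∀ b ∈ B, ∀ c ∈ B, E.D b c → E.add b c ∈ B) ∧
    ∀ b ∈ B, E.Bounding {c ∈ B | E.D c b}

/-- A natural effect algebra: one admitting a natural subset. -/
def Natural (E : EffectAlgebra L) : Prop := ∃ B, E.NaturalSubset B

/-- The orthogonally sequential property. -/
def OSP (E : EffectAlgebra L) : Prop :=
  ∀ b : ℕ → L, ∃ c : ℕ → L, E.Orthogonal c ∧ (∀ k, E.le (c k) (b k)) ∧
    ∀ (a : L) (k₀ : ℕ), E.le a (b k₀) → (∀ i, i ≠ k₀ → E.le (b i) (E.compl a)) →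
      E.le a (c k₀)

/-- The subsequential interpolation property. -/
def SIP (E : EffectAlgebra L) : Prop :=
  ∀ a : ℕ → L, E.Orthogonal a → ∀ M : Set ℕ, M.Infinite →
    ∃ (x : L) (N : Set ℕ), N ⊆ M ∧ N.Infinite ∧ (∀ n ∈ N, E.le (a n) x) ∧
      ∀ n ∉ N, E.le (a n) (E.compl x)

/-- Iterated orthosum starting from `x`: all steps defined. -/
def OrthoFrom (E : EffectAlgebra L) : L → List L → Prop
  | _, [] => True
  | x, y :: ys => E.D x y ∧ E.OrthoFrom (E.add x y) ys

/-- The orthosum `x ⊕ y₁ ⊕ ⋯ ⊕ yₙ` of a nonempty list. -/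
def psumList (E : EffectAlgebra L) : L → List L → L
  | x, [] => x
  | x, y :: ys => E.psumList (E.add x y) ys

/-- The variation of a measure: the sup over finite decompositions
`e = e₁ ⊕ ⋯ ⊕ eₙ` of `Σ ‖μ eᵢ‖`, valued in `[0,∞]`. -/
noncomputable def variation {G : Type*} [NormedAddCommGroup G]
    (E : EffectAlgebra L) (μ : L → G) (e : L) : ℝ≥0∞ :=
  sSup { v : ℝ≥0∞ | ∃ (x : L) (xs : List L), E.OrthoFrom x xs ∧ E.psumList x xs = e ∧
    v = ((x :: xs).map fun y => (‖μ y‖₊ : ℝ≥0∞)).sum }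

end EffectAlgebra

namespace EffectAlgebraAux

open EffectAlgebra

variable {L : Type*}

theorem assoc' (E : EffectAlgebra L) {x y z : L} (h1 : E.D x y) (h2 : E.D (E.add x y) z) :
    E.D y z ∧ E.D x (E.add y z) ∧ E.add (E.add x y) z = E.add x (E.add y z) := by
  have hz : E.D z (E.add x y) := E.comm_def h2
  have hzx : E.D z x := E.assoc_def₁ h1 hz
  have hzxy : E.D (E.add z x) y := E.assoc_def₂ h1 hz
  have hyzx : E.D y (E.add z x) := E.comm_def hzxy
  have hyz : E.D y z := E.assoc_def₁ hzx hyzx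
  have hyzx2 : E.D (E.add y z) x := E.assoc_def₂ hzx hyzx
  have hx : E.D x (E.add y z) := E.comm_def hyzx2
  refine ⟨hyz, hx, ?_⟩
  calc E.add (E.add x y) z = E.add z (E.add x y) := E.comm h2
    _ = E.add (E.add z x) y := (E.assoc h1 hz).symm
    _ = E.add y (E.add z x) := E.comm hzxy
    _ = E.add (E.add y z) x := (E.assoc hzx hyzx).symm
    _ = E.add x (E.add y z) := E.comm hyzx2

/-- The segment sum `a (m+1) ⊕ ⋯ ⊕ a (m+1+k)`. -/
def segA (E : EffectAlgebra L) (a : ℕ → L) (m : ℕ) : ℕ → L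
  | 0 => a (m + 1)
  | k + 1 => E.add (segA E a m k) (a (m + 2 + k))

theorem segA_lemma (E : EffectAlgebra L) {a : ℕ → L} (ho : E.Orthogonal a) (m k : ℕ) :
    E.D (E.psum a m) (segA E a m k) ∧ E.D (segA E a m k) (a (m + 2 + k)) ∧
      E.add (E.psum a m) (segA E a m k) = E.psum a (m + 1 + k) := by
  induction k with
  | zero =>
    have h1 : E.D (E.psum a m) (a (m + 1)) := ho m
    have he : E.add (E.psum a m) (a (m + 1)) = E.psum a (m + 1) := rfl
    have h2 : E.D (E.add (E.psum a m) (a (m + 1))) (a (m + 2)) := by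
      rw [he]; exact ho (m + 1)
    obtain ⟨hyz, -, -⟩ := assoc' E h1 h2
    exact ⟨h1, hyz, he⟩
  | succ k ih =>
    obtain ⟨h1, h2, he⟩ := ih
    have horth : E.D (E.add (E.psum a m) (segA E a m k)) (a (m + 2 + k)) := by
      rw [he]
      have hidx : m + 1 + k + 1 = m + 2 + k := by omega
      have h0 := ho (m + 1 + k)
      rwa [hidx] at h0
    obtain ⟨-, hx, heq⟩ := assoc' E h1 horth
    have hadd : E.add (E.psum a m) (segA E a m (k + 1)) = E.psum a (m + 1 + (k + 1)) := by
      show E.add (E.psum a m) (E.add (segA E a m k) (a (m + 2 + k))) = _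
      rw [← heq, he]
      have hidx : m + 2 + k = m + 1 + k + 1 := by omega
      rw [hidx]
      rfl
    have hnext : E.D (segA E a m (k + 1)) (a (m + 2 + (k + 1))) := by
      have horth2 : E.D (E.add (E.psum a m) (segA E a m (k + 1))) (a (m + 2 + (k + 1))) := by
        rw [hadd]
        have hidx : m + 1 + (k + 1) + 1 = m + 2 + (k + 1) := by omega
        have h0 := ho (m + 1 + (k + 1))
        rwa [hidx] at h0
      exact (assoc' E hx horth2).1
    exact ⟨hx, hnext, hadd⟩

/-- Concatenation of segments. -/
theorem segA_concat (E : EffectAlgebra L) {a : ℕ → L} (ho : E.Orthogonal a) (m k j : ℕ) :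
    E.D (segA E a m k) (segA E a (m + 1 + k) j) ∧
      E.add (segA E a m k) (segA E a (m + 1 + k) j) = segA E a m (k + 1 + j) := by
  induction j with
  | zero =>
    have hD : E.D (segA E a m k) (a (m + 2 + k)) := (segA_lemma E ho m k).2.1
    have hidx : m + 1 + k + 1 = m + 2 + k := by omega
    constructor
    · show E.D (segA E a m k) (a (m + 1 + k + 1))
      rwa [hidx]
    · show E.add (segA E a m k) (a (m + 1 + k + 1)) = E.add (segA E a m k) (a (m + 2 + k))
      rw [hidx]
  | succ j ih =>
    obtain ⟨h1, he⟩ := ih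
    have hD2 : E.D (segA E a (m + 1 + k) j) (a (m + 1 + k + 2 + j)) := (segA_lemma E ho (m + 1 + k) j).2.1
    have horth : E.D (E.add (segA E a m k) (segA E a (m + 1 + k) j)) (a (m + 1 + k + 2 + j)) := by
      rw [he]
      have hD3 : E.D (segA E a m (k + 1 + j)) (a (m + 2 + (k + 1 + j))) := (segA_lemma E ho m (k + 1 + j)).2.1
      have hidx : m + 2 + (k + 1 + j) = m + 1 + k + 2 + j := by omega
      rwa [hidx] at hD3
    obtain ⟨-, hx, heq⟩ := assoc' E h1 horth
    refine ⟨hx, ?_⟩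
    show E.add (segA E a m k) (E.add (segA E a (m + 1 + k) j) (a (m + 1 + k + 2 + j))) = _
    rw [← heq, he]
    have hidx : m + 1 + k + 2 + j = m + 2 + (k + 1 + j) := by omega
    rw [hidx]
    rfl

theorem blk_psum (E : EffectAlgebra L) {a : ℕ → L} (ho : E.Orthogonal a)
    (c : ℕ → ℕ) (hc : ∀ j, c j < c (j + 1)) (j : ℕ) :
    E.psum (fun i => segA E a (c i) (c (i + 1) - c i - 1)) j
      = segA E a (c 0) (c (j + 1) - c 0 - 1) := by
  have hmono : StrictMono c := strictMono_nat_of_lt_succ hc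
  induction j with
  | zero => rfl
  | succ j ih =>
    have h0 : c 0 < c (j + 1) := hmono (Nat.succ_pos j)
    have h1 : c 0 + 1 + (c (j + 1) - c 0 - 1) = c (j + 1) := by omega
    obtain ⟨hD, he⟩ := segA_concat E ho (c 0) (c (j + 1) - c 0 - 1) (c (j + 2) - c (j + 1) - 1)
    rw [h1] at hD he
    have h2 : c (j + 1) - c 0 - 1 + 1 + (c (j + 2) - c (j + 1) - 1) = c (j + 2) - c 0 - 1 := by
      have h3 : c (j + 1) < c (j + 2) := hc (j + 1); omega
    rw [h2] at he
    show E.add (E.psum (fun i => segA E a (c i) (c (i + 1) - c i - 1)) j)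
        (segA E a (c (j + 1)) (c (j + 2) - c (j + 1) - 1)) = _
    rw [ih, he]

theorem blk_orth (E : EffectAlgebra L) {a : ℕ → L} (ho : E.Orthogonal a)
    (c : ℕ → ℕ) (hc : ∀ j, c j < c (j + 1)) :
    E.Orthogonal (fun i => segA E a (c i) (c (i + 1) - c i - 1)) := by
  have hmono : StrictMono c := strictMono_nat_of_lt_succ hc
  intro j
  rw [blk_psum E ho c hc j]
  have h0 : c 0 < c (j + 1) := hmono (Nat.succ_pos j)
  have h1 : c 0 + 1 + (c (j + 1) - c 0 - 1) = c (j + 1) := by omega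
  have hD := (segA_concat E ho (c 0) (c (j + 1) - c 0 - 1) (c (j + 2) - c (j + 1) - 1)).1
  rwa [h1] at hD

theorem segA_measure {G : Type*} [AddCommGroup G] (E : EffectAlgebra L) {a : ℕ → L}
    {μ : L → G} (hμ : E.IsMeasure μ) (ho : E.Orthogonal a) (m k : ℕ) :
    μ (segA E a m k) = ∑ i ∈ Finset.range (m + 2 + k), μ (a i)
      - ∑ i ∈ Finset.range (m + 1), μ (a i) := by
  induction k with
  | zero =>
    show μ (a (m + 1)) = _
    rw [show m + 2 + 0 = (m + 1) + 1 from rfl, Finset.sum_range_succ]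
    abel
  | succ k ih =>
    show μ (E.add (segA E a m k) (a (m + 2 + k))) = _
    have h : m + 2 + (k + 1) = m + 2 + k + 1 := by omega
    have h2 : (∑ i ∈ Finset.range (m + 2 + k + 1), μ (a i))
        = (∑ i ∈ Finset.range (m + 2 + k), μ (a i)) + μ (a (m + 2 + k)) :=
      Finset.sum_range_succ _ _
    rw [hμ _ _ (segA_lemma E ho m k).2.1, ih, h, h2]
    abel

end EffectAlgebraAux

open EffectAlgebraAux in
open EffectAlgebra in
/-- For a measure valued in a complete Hausdorff topological abelian group,
strong additivity is equivalent to exhaustivity. -/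
theorem stmt3 {L : Type*} {G : Type*} [AddCommGroup G] [UniformSpace G]
    [IsUniformAddGroup G] [CompleteSpace G] [T2Space G]
    (E : EffectAlgebra L) (μ : L → G) (hμ : E.IsMeasure μ) :
    (∀ a : ℕ → L, E.Orthogonal a →
        ∃ g : G, Filter.Tendsto (fun n => ∑ k ∈ Finset.range n, μ (a k))
          Filter.atTop (nhds g)) ↔ E.Exhaustive μ := by
  constructor
  · intro h a ha
    obtain ⟨g, hg⟩ := h a ha
    have h2 := (hg.comp (tendsto_add_atTop_nat 1)).sub hg
    rw [sub_self] at h2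
    refine h2.congr fun n => ?_
    simp [Function.comp, Finset.sum_range_succ]
  · intro hex a ha
    set S : ℕ → G := fun n => ∑ k ∈ Finset.range n, μ (a k) with hS
    suffices hc : CauchySeq S from cauchySeq_tendsto_of_complete hc
    by_contra hnc
    rw [cauchySeq_iff] at hnc
    push_neg at hnc
    obtain ⟨V, hV, hbad⟩ := hnc
    rw [uniformity_eq_comap_nhds_zero G, Filter.mem_comap] at hV
    obtain ⟨W0, hW0, hWV⟩ := hV
    set W : Set G := W0 ∩ (fun x => -x) ⁻¹' W0 with hWdef
    have hW : W ∈ nhds (0 : G) := by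
      refine Filter.inter_mem hW0 ?_
      have hcont : ContinuousAt (fun x : G => -x) 0 := continuous_neg.continuousAt
      have := hcont.preimage_mem_nhds (by rwa [neg_zero] : W0 ∈ nhds (-(0 : G)))
      exact this
    have h0W0 : (0 : G) ∈ W0 := mem_of_mem_nhds hW0
    -- key selection
    have key : ∀ N, ∃ pq : ℕ × ℕ, N ≤ pq.1 ∧ pq.1 < pq.2 ∧ S (pq.2 + 1) - S (pq.1 + 1) ∉ W := by
      intro N
      obtain ⟨k, hk, l, hl, hkl⟩ := hbad (N + 1)
      have hne : k ≠ l := by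
        rintro rfl
        exact hkl (hWV (by simpa using h0W0))
      have hnW0 : S l - S k ∉ W0 := fun hmem => hkl (hWV hmem)
      rcases lt_or_gt_of_ne hne with hlt | hlt
      · refine ⟨(k - 1, l - 1), by omega, by omega, ?_⟩
        have e1 : k - 1 + 1 = k := by omega
        have e2 : l - 1 + 1 = l := by omega
        rw [e1, e2]
        intro hmem
        exact hnW0 hmem.1
      · refine ⟨(l - 1, k - 1), by omega, by omega, ?_⟩
        have e1 : l - 1 + 1 = l := by omega
        have e2 : k - 1 + 1 = k := by omega
        rw [e1, e2]
        intro hmem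
        have := hmem.2
        simp only [Set.mem_preimage, neg_sub] at this
        exact hnW0 this
    choose F hF1 hF2 hF3 using key
    set f : ℕ → ℕ × ℕ := fun n => Nat.rec (F 0) (fun _ ih => F (ih.2 + 1)) n with hf
    have hfF : ∀ n, ∃ N, f n = F N := by
      intro n
      cases n with
      | zero => exact ⟨0, rfl⟩
      | succ n => exact ⟨(f n).2 + 1, rfl⟩
    have hf1 : ∀ n, (f n).1 < (f n).2 := by
      intro n; obtain ⟨N, hN⟩ := hfF n; rw [hN]; exact hF2 N
    have hf3 : ∀ n, S ((f n).2 + 1) - S ((f n).1 + 1) ∉ W := by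
      intro n; obtain ⟨N, hN⟩ := hfF n; rw [hN]; exact hF3 N
    have hf2 : ∀ n, (f n).2 < (f (n + 1)).1 := by
      intro n
      have : (f n).2 + 1 ≤ (F ((f n).2 + 1)).1 := hF1 _
      simpa [hf] using this
    -- interleaved index sequence
    set c : ℕ → ℕ := fun j => if j % 2 = 0 then (f (j / 2)).1 else (f (j / 2)).2 with hcdef
    have hcmono : ∀ j, c j < c (j + 1) := by
      intro j
      rcases Nat.even_or_odd j with he | ho
      · have h1 : j % 2 = 0 := Nat.even_iff.mp he
        have h2 : (j + 1) % 2 = 1 := by omega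
        have h3 : (j + 1) / 2 = j / 2 := by omega
        simp only [hcdef, h1, h2, h3, if_true, if_pos rfl]
        norm_num
        exact hf1 (j / 2)
      · have h1 : j % 2 = 1 := Nat.odd_iff.mp ho
        have h2 : (j + 1) % 2 = 0 := by omega
        have h3 : (j + 1) / 2 = j / 2 + 1 := by omega
        simp only [hcdef, h1, h2, h3]
        norm_num
        exact hf2 (j / 2)
    -- the block sequence
    set blk : ℕ → L := fun i => segA E a (c i) (c (i + 1) - c i - 1) with hblk
    have hborth : E.Orthogonal blk := blk_orth E ha c hcmono
    have hten := hex blk hborth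
    have hev : ∀ᶠ j in Filter.atTop, μ (blk j) ∈ W := hten (hW)
    obtain ⟨J, hJ⟩ := Filter.eventually_atTop.mp hev
    have hJ2 : μ (blk (2 * J)) ∈ W := hJ (2 * J) (by omega)
    -- compute μ (blk (2J))
    have hmem : μ (blk (2 * J)) = S ((f J).2 + 1) - S ((f J).1 + 1) := by
      have hcc : c (2 * J) < c (2 * J + 1) := hcmono (2 * J)
      have hval : μ (blk (2 * J)) = S (c (2 * J) + 2 + (c (2 * J + 1) - c (2 * J) - 1))
          - S (c (2 * J) + 1) := segA_measure E hμ ha _ _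
      have hidx : c (2 * J) + 2 + (c (2 * J + 1) - c (2 * J) - 1) = c (2 * J + 1) + 1 := by omega
      rw [hidx] at hval
      have hc1 : c (2 * J) = (f J).1 := by
        simp only [hcdef]
        have h1 : (2 * J) % 2 = 0 := by omega
        have h2 : (2 * J) / 2 = J := by omega
        simp [h1, h2]
      have hc2 : c (2 * J + 1) = (f J).2 := by
        simp only [hcdef]
        have h1 : (2 * J + 1) % 2 = 1 := by omega
        have h2 : (2 * J + 1) / 2 = J := by omega
        simp [h1, h2]
      rw [hval, hc1, hc2]
    rw [hmem] at hJ2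
    exact hf3 J hJ2
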